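/- Let β₁, β₂ > 0 be real numbers satisfying 2β₁ − β₂ ≥ 4. Let f be analytic on the open unit disk 𝔻 with f(0) = 0, f′(0) = 1, and f(z) ≠ 0 for all z ∈ 𝔻 \ {0}. Define, for z ∈ 𝔻 \ {0}, S₁(z) = z f′(z)/f(z), S₂(z) = z² f″(z)/f(z), S₃(z) = z³ f‴(z)/f(z), and S_f(z) = 1 + β₁(S₂ − S₁² + S₁) + β₂(S₃ + 2S₂ + 2S₁³ − 2S₁² − 3S₁S₂). If S_f(z) ∈ {w ∈ ℂ : |w² − 1| < 2|w|} for every z ∈ 𝔻 \ {0}, then z f′(z)/f(z) ∈ {1 + log(w + (1 + w²)^{1/2}) : w ∈ 𝔻} for every z ∈ 𝔻 \ {0}; that is, f belongs to the class 𝒮*_ρ of starlike functions associated with the petal-shaped domain. -/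

import Mathlib

open Metric Real

-- sinh x ≤ x * cosh x for x ≥ 0
lemma sinh_le_mul_cosh {x : ℝ} (hx : 0 ≤ x) : Real.sinh x ≤ x * Real.cosh x := by
  have hmono : Monotone (fun t : ℝ => t * Real.cosh t - Real.sinh t) := by
    apply monotone_of_deriv_nonneg
    · fun_prop
    · intro y
      have h1 : HasDerivAt (fun t : ℝ => t * Real.cosh t - Real.sinh t)
          (1 * Real.cosh y + y * Real.sinh y - Real.cosh y) y := by
        exact ((hasDerivAt_id y).mul (Real.hasDerivAt_cosh y)).sub (Real.hasDerivAt_sinh y)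
      rw [h1.deriv]
      have : (0:ℝ) ≤ y * Real.sinh y := by
        rcases le_or_gt 0 y with h | h
        · exact mul_nonneg h (Real.sinh_nonneg_iff.2 h)
        · have := Real.sinh_nonpos_iff.2 h.le
          nlinarith
      linarith
  have := hmono hx
  simpa using this

lemma exp_34_lt : Real.exp (3/4) < 2.12 := by
  by_contra h
  push_neg at h
  have h4 : Real.exp (3/4) ^ 4 = Real.exp 1 ^ 3 := by
    rw [← Real.exp_nat_mul, ← Real.exp_nat_mul]; norm_num
  have h1 : (2.12:ℝ)^4 ≤ Real.exp (3/4)^4 := pow_le_pow_left₀ (by norm_num) h 4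
  have h2 : Real.exp 1 ^3 < 2.7182818286^3 :=
    pow_lt_pow_left₀ Real.exp_one_lt_d9 (Real.exp_pos 1).le (by norm_num)
  rw [h4] at h1
  norm_num at h1 h2
  linarith

lemma exp_34_gt : 2.11 < Real.exp (3/4) := by
  by_contra h
  push_neg at h
  have h4 : Real.exp (3/4) ^ 4 = Real.exp 1 ^ 3 := by
    rw [← Real.exp_nat_mul, ← Real.exp_nat_mul]; norm_num
  have h1 : Real.exp (3/4)^4 ≤ (2.11:ℝ)^4 := pow_le_pow_left₀ (Real.exp_pos _).le h 4
  have h2 : (2.7182818283:ℝ)^3 < Real.exp 1 ^3 :=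
    pow_lt_pow_left₀ Real.exp_one_gt_d9 (by norm_num) (by norm_num)
  rw [h4] at h1
  norm_num at h1 h2
  linarith

lemma cosh_34_lt : Real.cosh (3/4) < 4/3 := by
  rw [Real.cosh_eq]
  have h1 := exp_34_lt
  have h2 := exp_34_gt
  have hpos : (0:ℝ) < Real.exp (3/4) := Real.exp_pos _
  have h3 : Real.exp (-(3/4)) < 1/2.11 := by
    rw [Real.exp_neg, inv_lt_comm₀ hpos (by norm_num)]
    linarith
  norm_num at *
  linarith

lemma sinh_sq_le {x : ℝ} (hx : |x| ≤ 3/4) : Real.sinh x ^ 2 ≤ (Real.cosh (3/4))^2 * x^2 := by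
  have h1 : Real.sinh |x| ≤ |x| * Real.cosh |x| := sinh_le_mul_cosh (abs_nonneg x)
  have h2 : Real.cosh |x| ≤ Real.cosh (3/4) := by
    rw [Real.cosh_le_cosh]; rwa [abs_abs, abs_of_nonneg (by norm_num : (0:ℝ) ≤ 3/4)]
  have h3 : Real.sinh x ^ 2 = Real.sinh |x| ^ 2 := by
    rcases abs_cases x with ⟨h, _⟩ | ⟨h, _⟩ <;> rw [h] <;> simp [Real.sinh_neg]
  have h4 : (0:ℝ) ≤ Real.sinh |x| := Real.sinh_nonneg_iff.2 (abs_nonneg x)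
  have h5 : Real.sinh |x| ≤ |x| * Real.cosh (3/4) :=
    h1.trans (by nlinarith [abs_nonneg x, Real.one_le_cosh |x|])
  rw [h3]
  calc Real.sinh |x| ^ 2 ≤ (|x| * Real.cosh (3/4))^2 := by nlinarith
    _ = (Real.cosh (3/4))^2 * x^2 := by rw [mul_pow, sq_abs]; ring

lemma abs_sinh_lt_one {u : ℂ} (hu : norm u < 3/4) :
    norm (Complex.sinh u) < 1 := by
  set x := u.re with hxdef
  set y := u.im with hydef
  have hxy : x^2 + y^2 < (3/4)^2 := by
    have := Complex.sq_norm u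
    rw [Complex.normSq_apply] at this
    nlinarith [norm_nonneg u]
  have hxabs : |x| ≤ 3/4 := by
    have := Complex.abs_re_le_norm u
    rw [← hxdef] at this; linarith
  have hs : Complex.sinh u = ↑(Real.sinh x * Real.cos y) + ↑(Real.cosh x * Real.sin y) * Complex.I := by
    have hu' : u = (x:ℂ) + (y:ℂ) * Complex.I := (Complex.re_add_im u).symm
    rw [hu', Complex.sinh_add, Complex.sinh_mul_I, Complex.cosh_mul_I,
      ← Complex.ofReal_sinh, ← Complex.ofReal_cosh, ← Complex.ofReal_sin, ← Complex.ofReal_cos]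
    push_cast
    ring
  have habs2 : norm (Complex.sinh u) ^ 2
      = (Real.sinh x * Real.cos y)^2 + (Real.cosh x * Real.sin y)^2 := by
    rw [hs, Complex.sq_norm, Complex.normSq_add_mul_I]
  have hkey : (Real.sinh x * Real.cos y)^2 + (Real.cosh x * Real.sin y)^2
      = Real.sinh x ^2 + Real.sin y ^2 := by
    have h1 := Real.sin_sq_add_cos_sq y
    have h2 := Real.cosh_sq x
    nlinarith [h1, h2]
  have hsin : Real.sin y ^ 2 ≤ y^2 := by
    have := Real.abs_sin_le_abs (x := y)
    nlinarith [abs_nonneg y, abs_nonneg (Real.sin y), sq_abs y, sq_abs (Real.sin y)]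
  have hsh := sinh_sq_le hxabs
  have hc := cosh_34_lt
  have hc1 := Real.one_le_cosh (3/4 : ℝ)
  have : norm (Complex.sinh u) ^ 2 < 1 := by
    rw [habs2, hkey]
    have hp : (0:ℝ) < Real.cosh (3/4)^2 := by positivity
    have h6 := mul_lt_mul_of_pos_left hxy hp
    have hcsq : Real.cosh (3/4)^2 < 16/9 := by nlinarith
    have hcsq1 : (1:ℝ) ≤ Real.cosh (3/4)^2 := by nlinarith
    nlinarith [h6, hsin, hsh, mul_nonneg (sub_nonneg.2 hcsq1) (sq_nonneg y), hcsq]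
  nlinarith [norm_nonneg (Complex.sinh u)]

lemma petal_mem {u : ℂ} (hu : norm u < 3/4) :
    ∃ w ∈ ball (0:ℂ) 1, Complex.log (w + (1 + w^2) ^ ((1:ℂ)/2)) = u := by
  refine ⟨Complex.sinh u, by simpa [mem_ball, dist_zero_right] using abs_sinh_lt_one hu, ?_⟩
  have him : |u.im| < 3/4 := lt_of_le_of_lt (Complex.abs_im_le_norm u) hu
  have hpi : (3:ℝ) < Real.pi := Real.pi_gt_three
  have h1 : 1 + Complex.sinh u ^ 2 = Complex.cosh u ^ 2 := by
    have := Complex.cosh_sq_sub_sinh_sq u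
    linear_combination -this
  have hre : 0 < (Complex.cosh u).re := by
    have h2 : 2 * Complex.cosh u = Complex.exp u + Complex.exp (-u) := by
      have a := Complex.cosh_add_sinh u
      have b := Complex.cosh_sub_sinh u
      linear_combination a + b
    have h3 : (Complex.cosh u).re
        = (Real.exp u.re * Real.cos u.im + Real.exp (-u.re) * Real.cos u.im) / 2 := by
      have := congrArg Complex.re h2
      simp only [Complex.mul_re, Complex.add_re, Complex.exp_re, Complex.neg_re, Complex.neg_im] at this ⊢
      rw [Real.cos_neg] at this
      norm_num at this
      linarith
    have hcos : 0 < Real.cos u.im := by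
      apply Real.cos_pos_of_mem_Ioo
      constructor <;> [nlinarith [abs_le.1 him.le]; nlinarith [abs_le.1 him.le]]
    rw [h3]
    have e1 := Real.exp_pos u.re
    have e2 := Real.exp_pos (-u.re)
    positivity
  have h2 : (1 + Complex.sinh u ^ 2) ^ ((1:ℂ)/2) = Complex.cosh u := by
    rw [h1, one_div]
    exact_mod_cast Complex.sq_cpow_two_inv hre
  rw [h2, Complex.sinh_add_cosh]
  apply Complex.log_exp
  · nlinarith [abs_le.1 him.le]
  · nlinarith [abs_le.1 him.le]

open Set intervalIntegral

lemma stepA (β₁ β₂ : ℝ) (hβ₁ : 0 < β₁) (hβ₂ : 0 < β₂) (P : ℂ → ℂ)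
    (hP : AnalyticOnNhd ℂ P (ball 0 1))
    (hg : ∀ z ∈ ball (0:ℂ) 1, norm ((β₁:ℂ) * (z * deriv P z)
      + (β₂:ℂ) * (z^2 * deriv (deriv P) z)) ≤ norm z + norm z ^ 2)
    {w : ℂ} (hw : w ∈ ball (0:ℂ) 1) (hw0 : w ≠ 0) :
    norm (deriv P w) ≤ 1/β₁ + norm w/(β₁+β₂) := by
  have hP' : AnalyticOnNhd ℂ (deriv P) (ball 0 1) := hP.deriv
  have hP'' : AnalyticOnNhd ℂ (deriv (deriv P)) (ball 0 1) := hP'.deriv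
  set r := norm w with hrdef
  have hr1 : r < 1 := by
    rw [hrdef]; exact mem_ball_zero_iff.1 hw
  have hr0 : 0 < r := norm_pos_iff.2 hw0
  set κ := β₁/β₂ with hκdef
  have hκ : 0 < κ := by positivity
  have hmem : ∀ t : ℝ, 0 ≤ t → t ≤ 1 → (↑t * w) ∈ ball (0:ℂ) 1 := by
    intro t ht0 ht1
    rw [mem_ball_zero_iff, norm_mul, Complex.norm_real, Real.norm_eq_abs,
      abs_of_nonneg ht0]
    nlinarith
  set φ : ℝ → ℂ := fun t => ↑(t^κ : ℝ) * deriv P (↑t * w) with hφdef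
  set D : ℝ → ℂ := fun t =>
    ↑(κ * t^(κ-1) : ℝ) * deriv P (↑t * w) + ↑(t^κ : ℝ) * (deriv (deriv P) (↑t * w) * w)
    with hDdef
  -- derivative of φ on Ioo 0 1
  have hderiv : ∀ t ∈ Ioo (0:ℝ) 1, HasDerivAt φ (D t) t := by
    intro t ht
    have h1 : HasDerivAt (fun s : ℝ => ((s^κ : ℝ) : ℂ)) ↑(κ * t^(κ-1) : ℝ) t :=
      HasDerivAt.ofReal_comp (Real.hasDerivAt_rpow_const (Or.inl (ne_of_gt ht.1)))
    have hmem' : (↑t * w) ∈ ball (0:ℂ) 1 := hmem t ht.1.le ht.2.le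
    have hdP : HasDerivAt (deriv P) (deriv (deriv P) (↑t*w)) (↑t*w) :=
      (hP' _ hmem').differentiableAt.hasDerivAt
    have hinner : HasDerivAt (fun z : ℂ => z * w) w (↑t : ℂ) := hasDerivAt_mul_const w
    have h2 : HasDerivAt (fun s : ℝ => deriv P (↑s * w))
        (deriv (deriv P) (↑t * w) * w) t := (hdP.comp (h₂ := deriv P) (↑t : ℂ) hinner).comp_ofReal
    exact h1.mul h2
  -- continuity of φ on Icc 0 1
  have hcont : ContinuousOn φ (Icc 0 1) := by
    apply ContinuousOn.mul
    · refine Complex.continuous_ofReal.comp_continuousOn ?_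
      intro t _
      exact (Real.continuousAt_rpow_const t κ (Or.inr hκ.le)).continuousWithinAt
    · refine (hP'.continuousOn).comp ?_ ?_
      · exact (Complex.continuous_ofReal.mul continuous_const).continuousOn
      · intro t ht
        exact hmem t ht.1 ht.2
  -- pointwise bound for D on Ioc 0 1
  have hDb : ∀ t ∈ Ioc (0:ℝ) 1, norm (D t) ≤ (t^(κ-1) + r * t^κ)/β₂ := by
    intro t ht
    have ht0 := ht.1
    have hζmem : (↑t * w) ∈ ball (0:ℂ) 1 := hmem t ht0.le ht.2
    have hζ0 : (↑t * w) ≠ 0 := by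
      simp only [ne_eq, mul_eq_zero, Complex.ofReal_eq_zero, not_or]
      exact ⟨ne_of_gt ht0, hw0⟩
    have htκ : (t:ℝ)^κ = t^(κ-1) * t := by
      rw [← Real.rpow_add_one (ne_of_gt ht0) (κ-1)]
      congr 1
      ring
    have hNsplit : ((β₁:ℂ) * ((↑t*w) * deriv P (↑t*w)) + (β₂:ℂ) * ((↑t*w)^2 * deriv (deriv P) (↑t*w))) / (↑t*w)
        = (β₁:ℂ) * deriv P (↑t*w) + (β₂:ℂ) * ((↑t*w) * deriv (deriv P) (↑t*w)) := by
      rw [eq_comm, eq_div_iff hζ0]; ring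
    have hDeq : D t = (↑(t^(κ-1) : ℝ) / (β₂:ℂ)) *
        (((β₁:ℂ) * ((↑t*w) * deriv P (↑t*w)) + (β₂:ℂ) * ((↑t*w)^2 * deriv (deriv P) (↑t*w))) / (↑t*w)) := by
      rw [hNsplit, hDdef]
      simp only
      rw [htκ, hκdef]
      push_cast
      have hβ₂c : (β₂:ℂ) ≠ 0 := Complex.ofReal_ne_zero.2 (ne_of_gt hβ₂)
      field_simp
    rw [hDeq, norm_mul, norm_div, Complex.norm_real, Real.norm_eq_abs, Complex.norm_real, Real.norm_eq_abs]
    have e1 : |t^(κ-1)| = t^(κ-1) := abs_of_nonneg (by positivity)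
    have e2 : |β₂| = β₂ := abs_of_nonneg hβ₂.le
    rw [e1, e2, norm_div]
    have habsζ : norm (↑t*w) = t * r := by
      rw [norm_mul, Complex.norm_real, Real.norm_eq_abs, abs_of_nonneg ht0.le]
    have h2 := hg _ hζmem
    have h3 : norm ((β₁:ℂ) * ((↑t*w) * deriv P (↑t*w))
        + (β₂:ℂ) * ((↑t*w)^2 * deriv (deriv P) (↑t*w))) / norm (↑t*w)
        ≤ 1 + t * r := by
      rw [div_le_iff₀ (by rw [habsζ]; positivity)]
      calc _ ≤ norm (↑t*w) + norm (↑t*w)^2 := h2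
        _ = (1 + t*r) * norm (↑t*w) := by rw [habsζ]; ring
    calc t^(κ-1)/β₂ * (norm _ / norm (↑t*w)) ≤ t^(κ-1)/β₂ * (1 + t*r) := by
          apply mul_le_mul_of_nonneg_left h3 (by positivity)
      _ = (t^(κ-1) + r * t^κ)/β₂ := by rw [htκ]; field_simp
  -- integrability of the bound
  have hBint : IntervalIntegrable (fun t => (t^(κ-1) + r * t^κ)/β₂) MeasureTheory.volume 0 1 := by
    apply IntervalIntegrable.div_const
    exact (intervalIntegrable_rpow' (by linarith)).add
      ((intervalIntegrable_rpow' (by linarith)).const_mul r)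
  -- integrability of D
  have hDcont : ContinuousOn D (Ioc (0:ℝ) 1) := by
    have c1 : ContinuousOn (fun t : ℝ => (↑(κ * t^(κ-1) : ℝ) : ℂ)) (Ioc (0:ℝ) 1) := by
      refine Complex.continuous_ofReal.comp_continuousOn (ContinuousOn.mul continuousOn_const ?_)
      intro t ht
      exact (Real.continuousAt_rpow_const t (κ-1) (Or.inl (ne_of_gt ht.1))).continuousWithinAt
    have c2 : ContinuousOn (fun t : ℝ => deriv P (↑t * w)) (Ioc (0:ℝ) 1) :=
      (hP'.continuousOn).comp ((Complex.continuous_ofReal.mul continuous_const).continuousOn)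
        (fun t ht => hmem t ht.1.le ht.2)
    have c3 : ContinuousOn (fun t : ℝ => (↑(t^κ : ℝ) : ℂ)) (Ioc (0:ℝ) 1) := by
      refine Complex.continuous_ofReal.comp_continuousOn ?_
      intro t _
      exact (Real.continuousAt_rpow_const t κ (Or.inr hκ.le)).continuousWithinAt
    have c4 : ContinuousOn (fun t : ℝ => deriv (deriv P) (↑t * w) * w) (Ioc (0:ℝ) 1) :=
      ((hP''.continuousOn).comp ((Complex.continuous_ofReal.mul continuous_const).continuousOn)
        (fun t ht => hmem t ht.1.le ht.2)).mul continuousOn_const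
    exact (c1.mul c2).add (c3.mul c4)
  have hDint : IntervalIntegrable D MeasureTheory.volume 0 1 := by
    apply IntervalIntegrable.mono_fun hBint
    · apply ContinuousOn.aestronglyMeasurable
      · rwa [uIoc_of_le (by norm_num : (0:ℝ) ≤ 1)]
      · exact measurableSet_uIoc
    · filter_upwards [MeasureTheory.ae_restrict_mem measurableSet_uIoc] with t ht
      rw [uIoc_of_le (by norm_num : (0:ℝ) ≤ 1)] at ht
      have h0t := ht.1
      have := hDb t ht
      rw [Real.norm_eq_abs, abs_of_nonneg (by positivity)]
      exact this
  -- FTC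
  have hFTC : ∫ t in (0:ℝ)..1, D t = φ 1 - φ 0 :=
    integral_eq_sub_of_hasDeriv_right_of_le (by norm_num) hcont
      (fun t ht => (hderiv t ht).hasDerivWithinAt) hDint
  have hφ1 : φ 1 = deriv P w := by
    rw [hφdef]; simp [Real.one_rpow]
  have hφ0 : φ 0 = 0 := by
    rw [hφdef]; simp [Real.zero_rpow (ne_of_gt hκ)]
  -- norm bound
  have hbound : ‖∫ t in (0:ℝ)..1, D t‖ ≤ |∫ t in (0:ℝ)..1, (t^(κ-1) + r * t^κ)/β₂| := by
    refine (intervalIntegral.norm_integral_le_of_norm_le (by norm_num) ?_ hBint).trans (le_abs_self _)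
    filter_upwards with t ht
    exact hDb t ht
  -- compute the integral
  have hIval : ∫ t in (0:ℝ)..1, (t^(κ-1) + r * t^κ)/β₂ = (1/κ + r/(κ+1))/β₂ := by
    rw [intervalIntegral.integral_div]
    congr 1
    rw [intervalIntegral.integral_add (intervalIntegrable_rpow' (by linarith))
      ((intervalIntegrable_rpow' (by linarith)).const_mul r),
      intervalIntegral.integral_const_mul]
    rw [integral_rpow (Or.inl (by linarith)), integral_rpow (Or.inl (by linarith))]
    rw [Real.one_rpow, Real.one_rpow, Real.zero_rpow (by linarith : κ - 1 + 1 ≠ 0),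
      Real.zero_rpow (by linarith : κ + 1 ≠ 0)]
    ring_nf
  have hfinal : norm (deriv P w) ≤ (1/κ + r/(κ+1))/β₂ := by
    rw [← hφ1, ← sub_zero (φ 1), ← hφ0, ← hFTC]
    calc ‖∫ t in (0:ℝ)..1, D t‖ ≤ |∫ t in (0:ℝ)..1, (t^(κ-1) + r * t^κ)/β₂| := hbound
      _ = |(1/κ + r/(κ+1))/β₂| := by rw [hIval]
      _ = (1/κ + r/(κ+1))/β₂ := abs_of_nonneg (by positivity)
  calc norm (deriv P w) ≤ (1/κ + r/(κ+1))/β₂ := hfinal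
    _ = 1/β₁ + r/(β₁+β₂) := by
        rw [hκdef]
        field_simp

lemma stepB (β₁ β₂ : ℝ) (hβ₁ : 0 < β₁) (hβ₂ : 0 < β₂) (hcond : 2 * β₁ - β₂ ≥ 4)
    (P : ℂ → ℂ) (hP : AnalyticOnNhd ℂ P (ball 0 1)) (hP0 : P 0 = 1)
    (hg : ∀ z ∈ ball (0:ℂ) 1, norm ((β₁:ℂ) * (z * deriv P z)
      + (β₂:ℂ) * (z^2 * deriv (deriv P) z)) ≤ norm z + norm z ^ 2)
    {z : ℂ} (hz : z ∈ ball (0:ℂ) 1) (hz0 : z ≠ 0) :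
    norm (P z - 1) < 3/4 := by
  have hP' : AnalyticOnNhd ℂ (deriv P) (ball 0 1) := hP.deriv
  set r := norm z with hrdef
  have hr1 : r < 1 := by
    rw [hrdef]; exact mem_ball_zero_iff.1 hz
  have hr0 : 0 < r := norm_pos_iff.2 hz0
  have hmem : ∀ t : ℝ, 0 ≤ t → t ≤ 1 → (↑t * z) ∈ ball (0:ℂ) 1 := by
    intro t ht0 ht1
    rw [mem_ball_zero_iff, norm_mul, Complex.norm_real, Real.norm_eq_abs,
      abs_of_nonneg ht0]
    nlinarith
  set ψ : ℝ → ℂ := fun t => P (↑t * z) with hψdef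
  set D : ℝ → ℂ := fun t => deriv P (↑t * z) * z with hDdef
  have hderiv : ∀ t ∈ uIcc (0:ℝ) 1, HasDerivAt ψ (D t) t := by
    intro t ht
    rw [uIcc_of_le (by norm_num : (0:ℝ) ≤ 1)] at ht
    have hmem' : (↑t * z) ∈ ball (0:ℂ) 1 := hmem t ht.1 ht.2
    have hdP : HasDerivAt P (deriv P (↑t*z)) (↑t*z) :=
      (hP _ hmem').differentiableAt.hasDerivAt
    have hinner : HasDerivAt (fun y : ℂ => y * z) z (↑t : ℂ) := hasDerivAt_mul_const z
    exact (hdP.comp (↑t : ℂ) hinner).comp_ofReal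
  have hDcont : ContinuousOn D (uIcc (0:ℝ) 1) := by
    rw [uIcc_of_le (by norm_num : (0:ℝ) ≤ 1)]
    refine ContinuousOn.mul ?_ continuousOn_const
    exact (hP'.continuousOn).comp
      ((Complex.continuous_ofReal.mul continuous_const).continuousOn)
      (fun t ht => hmem t ht.1 ht.2)
  have hDint : IntervalIntegrable D MeasureTheory.volume 0 1 := hDcont.intervalIntegrable
  have hFTC : ∫ t in (0:ℝ)..1, D t = ψ 1 - ψ 0 :=
    intervalIntegral.integral_eq_sub_of_hasDerivAt hderiv hDint
  have hψ1 : ψ 1 = P z := by rw [hψdef]; norm_num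
  have hψ0 : ψ 0 = 1 := by rw [hψdef]; norm_num [hP0]
  set B : ℝ → ℝ := fun t => (1/β₁ + (t*r)/(β₁+β₂)) * r with hBdef
  have hBint : IntervalIntegrable B MeasureTheory.volume 0 1 := by
    apply ContinuousOn.intervalIntegrable
    fun_prop
  have hbound : ‖∫ t in (0:ℝ)..1, D t‖ ≤ |∫ t in (0:ℝ)..1, B t| := by
    refine (intervalIntegral.norm_integral_le_of_norm_le (by norm_num) ?_ hBint).trans (le_abs_self _)
    filter_upwards with t ht
    have hmem' : (↑t * z) ∈ ball (0:ℂ) 1 := hmem t ht.1.le ht.2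
    have hne' : (↑t * z) ≠ 0 := by
      simp only [ne_eq, mul_eq_zero, Complex.ofReal_eq_zero, not_or]
      exact ⟨ne_of_gt ht.1, hz0⟩
    have h1 := stepA β₁ β₂ hβ₁ hβ₂ P hP hg hmem' hne'
    have habs : norm (↑t * z) = t * r := by
      rw [norm_mul, Complex.norm_real, Real.norm_eq_abs, abs_of_nonneg ht.1.le]
    rw [habs] at h1
    rw [hDdef]
    simp only
    rw [norm_mul]
    rw [hBdef]
    simp only
    exact mul_le_mul_of_nonneg_right h1 (norm_nonneg z)
  have hBval : ∫ t in (0:ℝ)..1, B t = (1/β₁ + r/(2*(β₁+β₂))) * r := by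
    rw [hBdef]
    simp only
    rw [intervalIntegral.integral_mul_const]
    congr 1
    rw [intervalIntegral.integral_add (by apply ContinuousOn.intervalIntegrable; fun_prop)
      (by apply ContinuousOn.intervalIntegrable; fun_prop)]
    simp [intervalIntegral.integral_div, integral_id]
    field_simp
  have hkey : norm (P z - 1) ≤ (1/β₁ + r/(2*(β₁+β₂))) * r := by
    rw [← hψ1, ← hψ0, ← hFTC]
    calc ‖∫ t in (0:ℝ)..1, D t‖ ≤ |∫ t in (0:ℝ)..1, B t| := hbound
      _ = |(1/β₁ + r/(2*(β₁+β₂))) * r| := by rw [hBval]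
      _ = (1/β₁ + r/(2*(β₁+β₂))) * r := abs_of_nonneg (by positivity)
  have hfinal : (1/β₁ + r/(2*(β₁+β₂))) * r < 3/4 := by
    have hb2 : (2:ℝ) ≤ β₁ := by linarith
    have h1 : 1/β₁ ≤ 2/(4+β₂) := by
      rw [div_le_div_iff₀ (by linarith) (by linarith)]
      linarith
    have h2 : r/(2*(β₁+β₂)) ≤ r/(4+3*β₂) := by
      apply div_le_div_of_nonneg_left hr0.le (by linarith) (by linarith)
    have h3 : (1/β₁ + r/(2*(β₁+β₂))) * r ≤ (2/(4+β₂) + r/(4+3*β₂)) * r :=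
      mul_le_mul_of_nonneg_right (by linarith) hr0.le
    have h4 : (2/(4+β₂) + r/(4+3*β₂)) * r < 2/(4+β₂) + 1/(4+3*β₂) := by
      have e1 : (0:ℝ) < 4+β₂ := by linarith
      have e2 : (0:ℝ) < 4+3*β₂ := by linarith
      have p1 : 2/(4+β₂) * r < 2/(4+β₂) := by
        have : (0:ℝ) < 2/(4+β₂) := by positivity
        nlinarith
      have p2 : r/(4+3*β₂) * r ≤ 1/(4+3*β₂) := by
        rw [div_mul_eq_mul_div, div_le_div_iff₀ e2 e2]
        nlinarith [mul_lt_mul_of_pos_right hr1 hr0]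
      nlinarith
    have h5 : 2/(4+β₂) + 1/(4+3*β₂) ≤ 3/4 := by
      have e1 : (0:ℝ) < 4+β₂ := by linarith
      have e2 : (0:ℝ) < 4+3*β₂ := by linarith
      rw [div_add_div _ _ (ne_of_gt e1) (ne_of_gt e2), div_le_div_iff₀ (by positivity) (by norm_num)]
      nlinarith
    linarith
  linarith

open intervalIntegral in
theorem stmt17 (β₁ β₂ : ℝ) (hβ₁ : 0 < β₁) (hβ₂ : 0 < β₂)
    (hcond : 2 * β₁ - β₂ ≥ 4)
    (f : ℂ → ℂ) (hf : AnalyticOnNhd ℂ f (ball 0 1))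
    (hf0 : f 0 = 0) (hf'0 : deriv f 0 = 1)
    (hfne : ∀ z ∈ ball (0 : ℂ) 1, z ≠ 0 → f z ≠ 0)
    (S₁ S₂ S₃ Sf : ℂ → ℂ)
    (hS₁ : ∀ z, S₁ z = z * deriv f z / f z)
    (hS₂ : ∀ z, S₂ z = z ^ 2 * deriv (deriv f) z / f z)
    (hS₃ : ∀ z, S₃ z = z ^ 3 * deriv (deriv (deriv f)) z / f z)
    (hSf : ∀ z, Sf z = 1 + (β₁ : ℂ) * (S₂ z - S₁ z ^ 2 + S₁ z)
      + (β₂ : ℂ) * (S₃ z + 2 * S₂ z + 2 * S₁ z ^ 3 - 2 * S₁ z ^ 2 - 3 * S₁ z * S₂ z))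
    (hsub : ∀ z ∈ ball (0 : ℂ) 1, z ≠ 0 → ‖Sf z ^ 2 - 1‖ < 2 * ‖Sf z‖) :
    ∀ z ∈ ball (0 : ℂ) 1, z ≠ 0 → ∃ w ∈ ball (0 : ℂ) 1, z * deriv f z / f z = 1 + Complex.log (w + (1 + w ^ 2) ^ ((1 : ℂ) / 2)) := by
  have hF1 : AnalyticOnNhd ℂ (deriv f) (ball 0 1) := hf.deriv
  have hF2 : AnalyticOnNhd ℂ (deriv (deriv f)) (ball 0 1) := hF1.deriv
  have hF3 : AnalyticOnNhd ℂ (deriv (deriv (deriv f))) (ball 0 1) := hF2.deriv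
  set h : ℂ → ℂ := dslope f 0 with hhdef
  have hhd : DifferentiableOn ℂ h (ball 0 1) :=
    (Complex.differentiableOn_dslope (ball_mem_nhds 0 one_pos)).2 hf.differentiableOn
  have hh : AnalyticOnNhd ℂ h (ball 0 1) := hhd.analyticOnNhd isOpen_ball
  have hh0 : h 0 = 1 := by rw [hhdef, dslope_same]; exact hf'0
  have hhz : ∀ z ∈ ball (0:ℂ) 1, z ≠ 0 → h z = f z / z := by
    intro z hz hz0
    rw [hhdef, dslope_of_ne f hz0, slope_def_field]
    rw [hf0]
    simp
  have hhne : ∀ z ∈ ball (0:ℂ) 1, h z ≠ 0 := by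
    intro z hz
    rcases eq_or_ne z 0 with rfl | hz0
    · rw [hh0]; exact one_ne_zero
    · rw [hhz z hz hz0]; exact div_ne_zero (hfne z hz hz0) hz0
  set P : ℂ → ℂ := fun z => deriv f z / h z with hPdef
  have hPa : AnalyticOnNhd ℂ P (ball 0 1) := hF1.div hh hhne
  have hP0 : P 0 = 1 := by rw [hPdef]; simp [hh0, hf'0]
  have hPval : ∀ z ∈ ball (0:ℂ) 1, z ≠ 0 → P z = z * deriv f z / f z := by
    intro z hz hz0
    rw [hPdef]
    simp only
    rw [hhz z hz hz0]
    field_simp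
  set Rf : ℂ → ℂ := fun w =>
    ((deriv f w + w * deriv (deriv f) w) * f w - w * deriv f w * deriv f w)/(f w)^2 with hRdef
  have hopen : IsOpen (ball (0:ℂ) 1 \ {0}) := isOpen_ball.sdiff isClosed_singleton
  have hPev : ∀ z ∈ ball (0:ℂ) 1, z ≠ 0 → P =ᶠ[nhds z] (fun w => w * deriv f w / f w) := by
    intro z hz hz0
    apply Filter.eventuallyEq_of_mem (hopen.mem_nhds ⟨hz, fun hs => hz0 hs⟩)
    intro w hw
    exact hPval w hw.1 hw.2
  have hDP : ∀ z ∈ ball (0:ℂ) 1, z ≠ 0 → HasDerivAt P (Rf z) z := by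
    intro z hz hz0
    have hfz := hfne z hz hz0
    have hd1 : HasDerivAt f (deriv f z) z := (hf z hz).differentiableAt.hasDerivAt
    have hd2 : HasDerivAt (deriv f) (deriv (deriv f) z) z := (hF1 z hz).differentiableAt.hasDerivAt
    have hN : HasDerivAt (fun w => w * deriv f w) (1 * deriv f z + z * deriv (deriv f) z) z :=
      (hasDerivAt_id z).mul hd2
    have hQ := hN.div hd1 hfz
    refine HasDerivAt.congr_of_eventuallyEq ?_ (hPev z hz hz0)
    refine hQ.congr_deriv ?_
    rw [hRdef]
    simp only
    ring
  have hderivP : ∀ z ∈ ball (0:ℂ) 1, z ≠ 0 → deriv P z = Rf z := by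
    intro z hz hz0
    exact (hDP z hz hz0).deriv
  have hDDP : ∀ z ∈ ball (0:ℂ) 1, z ≠ 0 → deriv (deriv P) z =
      ((((deriv (deriv f) z + (1 * deriv (deriv f) z + z * deriv (deriv (deriv f)) z)) * f z
          + (deriv f z + z * deriv (deriv f) z) * deriv f z)
        - ((1 * deriv f z + z * deriv (deriv f) z) * deriv f z + z * deriv f z * deriv (deriv f) z))
          * (f z)^2
        - ((deriv f z + z * deriv (deriv f) z) * f z - z * deriv f z * deriv f z)
          * ((2:ℕ) * f z ^ (2-1) * deriv f z)) / ((f z)^2)^2 := by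
    intro z hz hz0
    have hfz := hfne z hz hz0
    have hd1 : HasDerivAt f (deriv f z) z := (hf z hz).differentiableAt.hasDerivAt
    have hd2 : HasDerivAt (deriv f) (deriv (deriv f) z) z := (hF1 z hz).differentiableAt.hasDerivAt
    have hd3 : HasDerivAt (deriv (deriv f)) (deriv (deriv (deriv f)) z) z :=
      (hF2 z hz).differentiableAt.hasDerivAt
    have hev2 : deriv P =ᶠ[nhds z] Rf := by
      apply Filter.eventuallyEq_of_mem (hopen.mem_nhds ⟨hz, fun hs => hz0 hs⟩)
      intro w hw
      exact hderivP w hw.1 hw.2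
    rw [hev2.deriv_eq]
    have t1 : HasDerivAt (fun w => deriv f w + w * deriv (deriv f) w)
        (deriv (deriv f) z + (1 * deriv (deriv f) z + z * deriv (deriv (deriv f)) z)) z :=
      hd2.add ((hasDerivAt_id z).mul hd3)
    have t2 := t1.mul hd1
    have t3 : HasDerivAt (fun w => w * deriv f w * deriv f w)
        ((1 * deriv f z + z * deriv (deriv f) z) * deriv f z + z * deriv f z * deriv (deriv f) z) z :=
      ((hasDerivAt_id z).mul hd2).mul hd2
    have tA := t2.sub t3
    have tB := hd1.pow 2
    have tR := tA.div tB (pow_ne_zero 2 hfz)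
    exact tR.deriv
  have hid1 : ∀ z ∈ ball (0:ℂ) 1, z ≠ 0 → z * deriv P z =
      z^2 * deriv (deriv f) z / f z - (z * deriv f z / f z)^2 + z * deriv f z / f z := by
    intro z hz hz0
    rw [hderivP z hz hz0, hRdef]
    have hfz := hfne z hz hz0
    field_simp
    ring
  have hid2 : ∀ z ∈ ball (0:ℂ) 1, z ≠ 0 → z^2 * deriv (deriv P) z =
      z^3 * deriv (deriv (deriv f)) z / f z + 2 * (z^2 * deriv (deriv f) z / f z)
      + 2 * (z * deriv f z / f z)^3 - 2 * (z * deriv f z / f z)^2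
      - 3 * (z * deriv f z / f z) * (z^2 * deriv (deriv f) z / f z) := by
    intro z hz hz0
    rw [hDDP z hz hz0]
    have hfz := hfne z hz hz0
    push_cast
    norm_num [← pow_mul]
    field_simp
    have hone : f z ^ 8 * (f z)⁻¹ ^ 8 = 1 := by
      rw [← mul_pow, mul_inv_cancel₀ hfz, one_pow]
    ring
  -- the analytic function G agreeing with Sf off 0
  set G : ℂ → ℂ := fun z => 1 + (β₁:ℂ) * (z * deriv P z) + (β₂:ℂ) * (z^2 * deriv (deriv P) z)
    with hGdef
  have hPa' : AnalyticOnNhd ℂ (deriv P) (ball 0 1) := hPa.deriv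
  have hPa'' : AnalyticOnNhd ℂ (deriv (deriv P)) (ball 0 1) := hPa'.deriv
  have hGa : AnalyticOnNhd ℂ G (ball 0 1) := by
    apply AnalyticOnNhd.add
    apply AnalyticOnNhd.add
    · exact analyticOnNhd_const
    · exact analyticOnNhd_const.mul ((analyticOnNhd_id).mul hPa')
    · exact analyticOnNhd_const.mul (((analyticOnNhd_id).pow 2).mul hPa'')
  have hG0 : G 0 = 1 := by rw [hGdef]; simp
  have hGSf : ∀ z ∈ ball (0:ℂ) 1, z ≠ 0 → G z = Sf z := by
    intro z hz hz0
    rw [hGdef]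
    simp only
    rw [hid1 z hz hz0, hid2 z hz hz0, hSf z, hS₁, hS₂, hS₃]
  have hGsub : ∀ z ∈ ball (0:ℂ) 1, norm (G z^2 - 1) < 2 * norm (G z) := by
    intro z hz
    rcases eq_or_ne z 0 with rfl | hz0
    · rw [hG0]
      simp only [one_pow, sub_self, norm_zero, norm_one]
      norm_num
    · rw [hGSf z hz hz0]; exact hsub z hz hz0
  have hGne : ∀ z ∈ ball (0:ℂ) 1, G z ≠ 0 := by
    intro z hz h0
    have := hGsub z hz
    rw [h0] at this
    norm_num at this
  set ω : ℂ → ℂ := fun z => (G z^2 - 1)/(2 * G z) with hωdef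
  have hωa : DifferentiableOn ℂ ω (ball 0 1) := by
    apply DifferentiableOn.div
    · exact ((hGa.pow 2).sub analyticOnNhd_const).differentiableOn
    · exact (analyticOnNhd_const.mul hGa).differentiableOn
    · intro z hz
      exact mul_ne_zero two_ne_zero (hGne z hz)
  have hω0 : ω 0 = 0 := by rw [hωdef]; simp [hG0]
  have hωlt : ∀ z ∈ ball (0:ℂ) 1, norm (ω z) < 1 := by
    intro z hz
    rw [hωdef]
    simp only [norm_div, norm_mul, Complex.norm_two]
    rw [div_lt_one (by linarith [norm_pos_iff.2 (hGne z hz)])]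
    exact hGsub z hz
  have hSchwarz : ∀ z ∈ ball (0:ℂ) 1, norm (ω z) ≤ norm z := by
    intro z hz
    apply Complex.norm_le_norm_of_mapsTo_ball hωa ?_ hω0 ?_
    · intro w hw
      rw [mem_closedBall_zero_iff]
      exact (hωlt w hw).le
    · exact mem_ball_zero_iff.1 hz
  set sfun : ℂ → ℂ := fun z => G z - ω z with hsfdef
  have hscont : ContinuousOn sfun (ball 0 1) := (hGa.continuousOn).sub (hωa.continuousOn)
  have hs0 : sfun 0 = 1 := by rw [hsfdef]; simp [hG0, hω0]
  have hssq : ∀ z ∈ ball (0:ℂ) 1, sfun z ^ 2 = 1 + ω z^2 := by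
    intro z hz
    rw [hsfdef, hωdef]
    simp only
    have hG := hGne z hz
    field_simp
    ring
  have hsre : ∀ z ∈ ball (0:ℂ) 1, (sfun z).re ≠ 0 := by
    intro z hz h0
    have h1 : (sfun z^2).re = (sfun z).re^2 - (sfun z).im^2 := by
      rw [sq, Complex.mul_re]; ring
    have h3 : (1 + ω z^2).re = 1 + (ω z^2).re := by simp [Complex.add_re]
    have h4 : -(norm (ω z)^2) ≤ (ω z^2).re := by
      have h5 := (abs_le.1 (Complex.abs_re_le_norm (ω z^2))).1
      rwa [norm_pow] at h5
    have h5 := hωlt z hz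
    rw [hssq z hz, h3, h0] at h1
    nlinarith [sq_nonneg ((sfun z).im), norm_nonneg (ω z)]
  have hspos : ∀ z ∈ ball (0:ℂ) 1, 0 < (sfun z).re := by
    intro z hz
    by_contra hle
    push_neg at hle
    have hlt : (sfun z).re < 0 := lt_of_le_of_ne hle (hsre z hz)
    have hconn : IsPreconnected (ball (0:ℂ) 1) := (convex_ball (0:ℂ) 1).isPreconnected
    have hcontre : ContinuousOn (fun w => (sfun w).re) (ball (0:ℂ) 1) :=
      Complex.continuous_re.comp_continuousOn hscont
    have h0b : (0:ℂ) ∈ ball (0:ℂ) 1 := mem_ball_self one_pos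
    have hIcc := hconn.intermediate_value hz h0b hcontre
    have h0m : (0:ℝ) ∈ Set.Icc ((sfun z).re) ((sfun 0).re) := by
      rw [hs0]
      constructor
      · exact hlt.le
      · norm_num
    obtain ⟨z₂, hz₂, hre0⟩ := hIcc h0m
    exact hsre z₂ hz₂ hre0
  have hGbound : ∀ z ∈ ball (0:ℂ) 1, norm (G z - 1) ≤ norm z + norm z^2 := by
    intro z hz
    have hsub1 : G z - 1 = ω z + (sfun z - 1) := by rw [hsfdef]; ring
    have hmul : (sfun z - 1) * (sfun z + 1) = ω z^2 := by
      linear_combination hssq z hz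
    have habs1 : (1:ℝ) ≤ norm (sfun z + 1) := by
      have h1 : 1 ≤ (sfun z + 1).re := by
        simp only [Complex.add_re, Complex.one_re]
        linarith [hspos z hz]
      calc (1:ℝ) ≤ (sfun z+1).re := h1
        _ ≤ |(sfun z+1).re| := le_abs_self _
        _ ≤ norm (sfun z+1) := Complex.abs_re_le_norm _
    have hne1 : sfun z + 1 ≠ 0 := by
      intro hcon
      rw [hcon] at habs1
      rw [norm_zero] at habs1
      norm_num at habs1
    have heq : sfun z - 1 = ω z^2/(sfun z + 1) := by
      rw [eq_div_iff hne1]; exact hmul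
    have hs1 : norm (sfun z - 1) ≤ norm (ω z)^2 := by
      rw [heq, norm_div, norm_pow]
      exact div_le_self (by positivity) habs1
    have hω := hSchwarz z hz
    have hωnn := norm_nonneg (ω z)
    have hznn := norm_nonneg z
    calc norm (G z - 1) ≤ norm (ω z) + norm (sfun z - 1) := by
          rw [hsub1]; exact norm_add_le _ _
      _ ≤ norm (ω z) + norm (ω z)^2 := by linarith
      _ ≤ norm z + norm z^2 := by nlinarith
  have hgB : ∀ z ∈ ball (0:ℂ) 1, norm ((β₁:ℂ) * (z * deriv P z)
      + (β₂:ℂ) * (z^2 * deriv (deriv P) z)) ≤ norm z + norm z ^ 2 := by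
    intro z hz
    have hB := hGbound z hz
    rw [hGdef] at hB
    simp only at hB
    convert hB using 2
    ring
  intro z hz hz0
  have hPz := stepB β₁ β₂ hβ₁ hβ₂ hcond P hPa hP0 hgB hz hz0
  have hueq : z * deriv f z / f z - 1 = P z - 1 := by rw [hPval z hz hz0]
  have hu : norm (z * deriv f z / f z - 1) < 3/4 := by rw [hueq]; exact hPz
  obtain ⟨w, hwmem, hlog⟩ := petal_mem hu
  exact ⟨w, hwmem, by rw [hlog]; ring⟩
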